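/- In the polynomial representation of the A₁-type DAHA, the operators M_{(1,0)} = X + X⁻¹, M_{(0,1)} = Y + Y⁻¹, M_{(1,1)} = q^{1/2}XY + (q^{1/2}XY)⁻¹ satisfy the relation q^{−1/2}·M_{(1,0)}·M_{(0,1)} − q^{1/2}·M_{(0,1)}·M_{(1,0)} = (q⁻¹ − q)·M_{(1,1)}, realizing the skein relation A·x·y − A⁻¹·y·x = (A² − A⁻²)·z of the once-punctured torus with A = q^{−1/2}. -/

import Mathlib

noncomputable section

/-- Polynomial representation of `T`: `T = t⁻¹ s + (t⁻¹ − t)(x² − 1)⁻¹(s − 1)`. -/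
def THeckeOp (t : ℂ) (f : ℂ → ℂ) : ℂ → ℂ := fun x =>
  t⁻¹ * f x⁻¹ + (t⁻¹ - t) * (x ^ 2 - 1)⁻¹ * (f x⁻¹ - f x)

/-- The inverse of `T`: `T⁻¹ = T + (t − t⁻¹)` (from the Hecke relation). -/
def THeckeOpInv (t : ℂ) (f : ℂ → ℂ) : ℂ → ℂ := fun x => THeckeOp t f x + (t - t⁻¹) * f x

/-- The Dunkl–Cherednik operator `Y = ∂·s·T`, `(Y f)(x) = (T f)((qx)⁻¹)`. -/
def Yop (q t : ℂ) (f : ℂ → ℂ) : ℂ → ℂ := fun x => THeckeOp t f ((q * x)⁻¹)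

/-- The inverse Dunkl–Cherednik operator `Y⁻¹ = T⁻¹·s·∂⁻¹`. -/
def YopInv (q t : ℂ) (f : ℂ → ℂ) : ℂ → ℂ := THeckeOpInv t fun y => f (q⁻¹ * y⁻¹)

/-- Multiplication by `x`. -/
def Xop (f : ℂ → ℂ) : ℂ → ℂ := fun x => x * f x

/-- Multiplication by `x⁻¹`. -/
def XopInv (f : ℂ → ℂ) : ℂ → ℂ := fun x => x⁻¹ * f x

set_option maxHeartbeats 1600000 in
/-- In the polynomial representation of the `A₁`-type DAHA, restricted to the symmetric
subspace `ℂ[x + x⁻¹]`, the operators `M_{(1,0)} = X + X⁻¹`, `M_{(0,1)} = Y + Y⁻¹`,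
`M_{(1,1)} = q^{1/2}XY + (q^{1/2}XY)⁻¹` satisfy
`q^{−1/2}·M_{(1,0)}·M_{(0,1)} − q^{1/2}·M_{(0,1)}·M_{(1,0)} = (q⁻¹ − q)·M_{(1,1)}`,
realizing the once-punctured-torus skein relation `A·x·y − A⁻¹·y·x = (A² − A⁻²)·z`
with `A = q^{−1/2}` (here `v = q^{1/2}`). -/
theorem daha_A1_skein_relation (q t v : ℂ) (hq : q ≠ 0) (ht : t ≠ 0)
    (hv0 : v ≠ 0) (hv : v ^ 2 = q)
    (f : ℂ → ℂ) (hf : ∀ y : ℂ, f y⁻¹ = f y)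
    (x : ℂ) (hx0 : x ≠ 0) (hx : ∀ m : ℤ, x ≠ q ^ m ∧ x ≠ -q ^ m) :
    let M10 : (ℂ → ℂ) → (ℂ → ℂ) := fun g y => Xop g y + XopInv g y
    let M01 : (ℂ → ℂ) → (ℂ → ℂ) := fun g y => Yop q t g y + YopInv q t g y
    let M11 : (ℂ → ℂ) → (ℂ → ℂ) := fun g y =>
      v * Xop (Yop q t g) y + v⁻¹ * YopInv q t (XopInv g) y
    v⁻¹ * M10 (M01 f) x - v * M01 (M10 f) x = (q⁻¹ - q) * M11 f x := by
  intro M10 M01 M11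
  simp only [M10, M01, M11, Xop, XopInv, Yop, YopInv, THeckeOp, THeckeOpInv, inv_inv]
  have hq1 : f ((q*x)⁻¹) = f (q*x) := hf _
  have hq2 : f (q⁻¹*x⁻¹) = f (q*x) := by rw [← mul_inv, hf]
  rw [hq1, hq2]
  have h0 := hx 0
  have hm1 := hx (-1)
  simp only [zpow_zero, zpow_neg_one] at h0 hm1
  have h1 : x ^ 2 - 1 ≠ 0 := by
    have hne : (x - 1) * (x + 1) ≠ 0 :=
      mul_ne_zero (sub_ne_zero.2 h0.1) (by simpa [sub_neg_eq_add] using sub_ne_zero.2 h0.2)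
    intro h; exact hne (by linear_combination h)
  have h2 : q ^ 2 * x ^ 2 - 1 ≠ 0 := by
    have ha : q * x - 1 ≠ 0 := by
      intro h; exact hm1.1 (by field_simp; linear_combination h)
    have hb : q * x + 1 ≠ 0 := by
      intro h; exact hm1.2 (by field_simp; linear_combination h)
    intro h; exact (mul_ne_zero ha hb) (by linear_combination h)
  set a := f (q * x) with ha
  set b := f (q⁻¹ * x) with hb
  have e1 : ((q * x)⁻¹ ^ 2 - 1)⁻¹ = -(q ^ 2 * x ^ 2) * (q ^ 2 * x ^ 2 - 1)⁻¹ := by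
    refine inv_eq_of_mul_eq_one_right ?_
    have h3 : (q * x) ^ 2 ≠ 0 := pow_ne_zero _ (mul_ne_zero hq hx0)
    field_simp
    ring
  rw [e1]
  subst hv
  have hA := inv_mul_cancel₀ h1
  have hB := inv_mul_cancel₀ h2
  set A := (x ^ 2 - 1)⁻¹ with hAdef
  set B := ((v ^ 2) ^ 2 * x ^ 2 - 1)⁻¹ with hBdef
  field_simp
  rw [hAdef, hBdef]
  field_simp
  ring
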